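/- Under the identification (x,y),(x̄,ȳ) ↦ (q,p) with q = ((x+x̄)/2, (y+ȳ)/2) and p = ((ȳ−y)/2, (x−x̄)/2), the graph of the outer billiard correspondence relative to a Lagrangian submanifold L ⊂ ℝ²ⁿ is exactly the conormal bundle of L in T*ℝ²ⁿ. In particular, the graph is a Lagrangian submanifold of (ℝ²ⁿ × ℝ²ⁿ, ω ⊖ ω), so the outer billiard correspondence is symplectic. -/
import Mathlib


open Finset

noncomputable def stdOmega {n : ℕ} (v w : (Fin n → ℝ) × (Fin n → ℝ)) : ℝ :=
  (∑ i, v.1 i * w.2 i) - ∑ i, v.2 i * w.1 i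

/-- Under the identification `(A,B) ↦ (q,p)`, `q=(A+B)/2`, `p=((B₂−A₂)/2,(A₁−B₁)/2)`,
the graph of the outer billiard correspondence relative to a Lagrangian submanifold `L`
(given with its tangent spaces `T`, each a Lagrangian subspace) is exactly the conormal
bundle of `L`. -/
theorem outer_billiard_graph_is_conormal (n : ℕ)
    (L : Set ((Fin n → ℝ) × (Fin n → ℝ)))
    (T : ((Fin n → ℝ) × (Fin n → ℝ)) → Submodule ℝ ((Fin n → ℝ) × (Fin n → ℝ)))
    (hLag : ∀ q ∈ L, ∀ v, v ∈ T q ↔ ∀ w ∈ T q, stdOmega v w = 0)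
    (ι : ((Fin n → ℝ) × (Fin n → ℝ)) × ((Fin n → ℝ) × (Fin n → ℝ)) →
         ((Fin n → ℝ) × (Fin n → ℝ)) × ((Fin n → ℝ) × (Fin n → ℝ)))
    (hι : ∀ A B, ι (A, B) =
      ((1 / 2 : ℝ) • (A + B), (fun i => (B.2 i - A.2 i) / 2, fun i => (A.1 i - B.1 i) / 2))) :
    ι '' {AB | (1 / 2 : ℝ) • (AB.1 + AB.2) ∈ L ∧
              AB.2 - AB.1 ∈ T ((1 / 2 : ℝ) • (AB.1 + AB.2))} =
    {qp | qp.1 ∈ L ∧ ∀ v ∈ T qp.1,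
        (∑ i, qp.2.1 i * v.1 i) + ∑ i, qp.2.2 i * v.2 i = 0} := by
  ext ⟨q, p⟩
  simp only [Set.mem_image, Set.mem_setOf_eq]
  constructor
  · rintro ⟨⟨A, B⟩, ⟨hq, hT⟩, hAB⟩
    rw [hι] at hAB
    obtain ⟨h1, h2⟩ := Prod.mk.injEq .. ▸ hAB
    subst h1
    subst h2
    refine ⟨hq, fun v hv => ?_⟩
    have hst := (hLag _ hq (B - A)).1 hT v hv
    simp only [stdOmega, Prod.fst_sub, Prod.snd_sub, Pi.sub_apply] at hst
    simp only [div_mul_eq_mul_div, ← Finset.sum_div]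
    have h3 : ∑ i, (A.1 i - B.1 i) * v.2 i = -∑ i, (B.1 i - A.1 i) * v.2 i := by
      rw [← Finset.sum_neg_distrib]
      exact Finset.sum_congr rfl fun i _ => by ring
    rw [h3]
    linarith
  · rintro ⟨hq, hp⟩
    refine ⟨((fun i => q.1 i + p.2 i, fun i => q.2 i - p.1 i),
             (fun i => q.1 i - p.2 i, fun i => q.2 i + p.1 i)), ⟨?_, ?_⟩, ?_⟩
    · have : (1 / 2 : ℝ) • (((fun i => q.1 i + p.2 i, fun i => q.2 i - p.1 i) : (Fin n → ℝ) × (Fin n → ℝ)) + (fun i => q.1 i - p.2 i, fun i => q.2 i + p.1 i)) = q := by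
        refine Prod.ext ?_ ?_ <;> funext i <;>
          simp [Prod.smul_fst, Prod.smul_snd] <;> ring
      rw [this]; exact hq
    · have hQ : (1 / 2 : ℝ) • (((fun i => q.1 i + p.2 i, fun i => q.2 i - p.1 i) : (Fin n → ℝ) × (Fin n → ℝ)) + (fun i => q.1 i - p.2 i, fun i => q.2 i + p.1 i)) = q := by
        refine Prod.ext ?_ ?_ <;> funext i <;>
          simp [Prod.smul_fst, Prod.smul_snd] <;> ring
      rw [hQ]
      have hu : (((fun i => q.1 i - p.2 i, fun i => q.2 i + p.1 i) : (Fin n → ℝ) × (Fin n → ℝ)) - (fun i => q.1 i + p.2 i, fun i => q.2 i - p.1 i)) = ((fun i => -2 * p.2 i, fun i => 2 * p.1 i) : (Fin n → ℝ) × (Fin n → ℝ)) := by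
        refine Prod.ext ?_ ?_ <;> funext i <;> simp <;> ring
      rw [hu]
      rw [hLag q hq]
      intro w hw
      have := hp w hw
      simp only [stdOmega]
      have e1 : ∑ i, -2 * p.2 i * w.2 i = -2 * ∑ i, p.2 i * w.2 i := by
        rw [Finset.mul_sum]; exact Finset.sum_congr rfl fun i _ => by ring
      have e2 : ∑ i, 2 * p.1 i * w.1 i = 2 * ∑ i, p.1 i * w.1 i := by
        rw [Finset.mul_sum]; exact Finset.sum_congr rfl fun i _ => by ring
      rw [e1, e2]
      linarith
    · rw [hι]
      refine Prod.ext ?_ ?_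
      · refine Prod.ext ?_ ?_ <;> funext i <;>
          simp [Prod.smul_fst, Prod.smul_snd] <;> ring
      · refine Prod.ext ?_ ?_ <;> funext i <;> simp
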